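/- With μ a symmetric probability measure on ℝ that is not a Dirac mass, h(s) = ∫ s/(s²+u²) dμ(u), and k(s,t) = (s−t)(1/h(s) − s + t), the function k is real-analytic on (0,∞) × ℝ, and for each fixed t > 0 the map s ↦ k(s,t) is a strictly increasing bijection of (t,∞) onto (0,∞). -/

import Mathlib

open MeasureTheory Set Complex

/-- `h μ s = ∫ s/(s² + u²) dμ(u)`. -/
noncomputable def hfun (μ : MeasureTheory.Measure ℝ) (s : ℝ) : ℝ :=
  ∫ u, s / (s ^ 2 + u ^ 2) ∂μ

/-- `k(s,t) = (s−t)(1/h(s) − s + t)`. -/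
noncomputable def kfun (μ : MeasureTheory.Measure ℝ) (s t : ℝ) : ℝ :=
  (s - t) * (1 / hfun μ s - s + t)

section Aux
variable (μ : MeasureTheory.Measure ℝ) [IsProbabilityMeasure μ]

lemma my_int_bdd {E : Type*} [NormedAddCommGroup E] {f : ℝ → E} (hf : AEStronglyMeasurable f μ)
    (C : ℝ) (h : ∀ u, ‖f u‖ ≤ C) : Integrable f μ :=
  ⟨hf, HasFiniteIntegral.of_bounded (ae_of_all _ h)⟩

lemma int_inv {s : ℝ} (hs : 0 < s) : Integrable (fun u : ℝ => (s ^ 2 + u ^ 2)⁻¹) μ := by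
  refine my_int_bdd μ ?_ (s ^ 2)⁻¹ fun u => ?_
  · exact (Continuous.aestronglyMeasurable
      ((continuous_const.add (continuous_pow 2)).inv₀ (fun u => (by positivity : (0:ℝ) < s ^ 2 + u ^ 2).ne')))
  · rw [Real.norm_eq_abs, _root_.abs_of_nonneg (by positivity)]
    exact inv_anti₀ (by positivity) (by nlinarith)

lemma Fr_pos {s : ℝ} (hs : 0 < s) : 0 < ∫ u, (s ^ 2 + u ^ 2)⁻¹ ∂μ := by
  rw [integral_pos_iff_support_of_nonneg (fun u => by positivity) (int_inv μ hs)]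
  have : (Function.support fun u : ℝ => (s ^ 2 + u ^ 2)⁻¹) = univ := by
    ext u; simp [Function.mem_support]; positivity
  rw [this]
  simp

end Aux
section Aux2
variable (μ : MeasureTheory.Measure ℝ) [IsProbabilityMeasure μ]

lemma compl_zero_pos (hnd : μ ≠ MeasureTheory.Measure.dirac 0) : 0 < μ ({0}ᶜ : Set ℝ) := by
  rcases (zero_le : (0:ENNReal) ≤ μ ({0}ᶜ : Set ℝ)).eq_or_lt with h | h
  · exfalso
    apply hnd
    have h0 : μ ({0}ᶜ : Set ℝ) = 0 := h.symm
    have h1 : μ ({0} : Set ℝ) = 1 :=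
      (prob_compl_eq_zero_iff (measurableSet_singleton 0)).mp h0
    have h2 : μ.restrict ({0}ᶜ : Set ℝ) = 0 := Measure.restrict_eq_zero.mpr h0
    have h3 := Measure.restrict_add_restrict_compl (μ := μ) (measurableSet_singleton (0:ℝ))
    rw [h2, add_zero] at h3
    rw [← h3, Measure.restrict_singleton, h1, one_smul]
  · exact h

lemma Fr_lt {s : ℝ} (hs : 0 < s) (hnd : μ ≠ MeasureTheory.Measure.dirac 0) :
    ∫ u, (s ^ 2 + u ^ 2)⁻¹ ∂μ < (s ^ 2)⁻¹ := by
  have hint : Integrable (fun u : ℝ => (s ^ 2)⁻¹ - (s ^ 2 + u ^ 2)⁻¹) μ :=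
    (integrable_const _).sub (int_inv μ hs)
  have hpos : 0 < ∫ u, ((s ^ 2)⁻¹ - (s ^ 2 + u ^ 2)⁻¹) ∂μ := by
    rw [integral_pos_iff_support_of_nonneg (fun u => by
      simp only [Pi.zero_apply, sub_nonneg]
      exact inv_anti₀ (by positivity) (by nlinarith)) hint]
    have hsupp : (Function.support fun u : ℝ => (s ^ 2)⁻¹ - (s ^ 2 + u ^ 2)⁻¹) = {0}ᶜ := by
      ext u
      simp only [Function.mem_support, mem_compl_iff, mem_singleton_iff, sub_ne_zero]
      constructor
      · rintro h rfl; simp at h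
      · intro h
        have h2 : s ^ 2 < s ^ 2 + u ^ 2 := by
          have : 0 < u ^ 2 := by positivity
          linarith
        intro heq
        have := inv_strictAnti₀ (by positivity : (0:ℝ) < s ^ 2) h2
        rw [heq] at this
        exact lt_irrefl _ this
    rw [hsupp]
    exact compl_zero_pos μ hnd
  have := integral_sub (integrable_const ((s ^ 2)⁻¹ : ℝ)) (int_inv μ hs)
  rw [this] at hpos
  simp only [integral_const, measure_univ, probReal_univ, one_smul, smul_eq_mul, one_mul] at hpos
  linarith
end Aux2
section Aux3
variable (μ : MeasureTheory.Measure ℝ) [IsProbabilityMeasure μ]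

lemma cheb {s₁ s₂ : ℝ} (h1 : 0 < s₁) (h2 : 0 < s₂) :
    (∫ u, (s₁ ^ 2 + u ^ 2)⁻¹ ∂μ) * (∫ u, (s₂ ^ 2 + u ^ 2)⁻¹ ∂μ) ≤
      ∫ u, (s₁ ^ 2 + u ^ 2)⁻¹ * (s₂ ^ 2 + u ^ 2)⁻¹ ∂μ := by
  set a : ℝ → ℝ := fun u => (s₁ ^ 2 + u ^ 2)⁻¹ with ha
  set b : ℝ → ℝ := fun u => (s₂ ^ 2 + u ^ 2)⁻¹ with hb
  have hia : Integrable a μ := int_inv μ h1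
  have hib : Integrable b μ := int_inv μ h2
  have hiab : Integrable (fun u => a u * b u) μ := by
    refine my_int_bdd μ (hia.aestronglyMeasurable.mul hib.aestronglyMeasurable) ((s₁^2)⁻¹ * (s₂^2)⁻¹) fun u => ?_
    rw [Real.norm_eq_abs, _root_.abs_of_nonneg (by positivity)]
    exact mul_le_mul (inv_anti₀ (by positivity) (by nlinarith)) (inv_anti₀ (by positivity) (by nlinarith)) (by positivity) (by positivity)
  set P := μ.prod μ with hP
  have I1 : Integrable (fun p : ℝ × ℝ => a p.1 * b p.1) P := by
    have := hiab.mul_prod (integrable_const (1:ℝ)) (μ := μ) (ν := μ)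
    simpa using this
  have I4 : Integrable (fun p : ℝ × ℝ => a p.2 * b p.2) P := by
    have := (integrable_const (1:ℝ)).mul_prod hiab (μ := μ) (ν := μ)
    simpa using this
  have I2 : Integrable (fun p : ℝ × ℝ => a p.1 * b p.2) P := hia.mul_prod hib
  have I3 : Integrable (fun p : ℝ × ℝ => a p.2 * b p.1) P :=
    (hib.mul_prod hia).congr (Filter.Eventually.of_forall fun p => mul_comm _ _)
  have key : 0 ≤ ∫ p : ℝ × ℝ, (a p.1 - a p.2) * (b p.1 - b p.2) ∂P := by
    refine integral_nonneg fun p => ?_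
    rcases le_total (p.1 ^ 2) (p.2 ^ 2) with h | h
    · have ha' : a p.1 - a p.2 ≥ 0 := by
        simp only [ha, sub_nonneg]; exact inv_anti₀ (by positivity) (by linarith)
      have hb' : b p.1 - b p.2 ≥ 0 := by
        simp only [hb, sub_nonneg]; exact inv_anti₀ (by positivity) (by linarith)
      exact mul_nonneg ha' hb'
    · have ha' : a p.1 - a p.2 ≤ 0 := by
        simp only [ha, sub_nonpos]; exact inv_anti₀ (by positivity) (by linarith)
      have hb' : b p.1 - b p.2 ≤ 0 := by
        simp only [hb, sub_nonpos]; exact inv_anti₀ (by positivity) (by linarith)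
      have h0 := mul_nonneg (neg_nonneg.2 ha') (neg_nonneg.2 hb')
      have : (0:ℝ) ≤ (a p.1 - a p.2) * (b p.1 - b p.2) := by nlinarith [h0]
      simpa using this
  have expand : ∫ p : ℝ × ℝ, (a p.1 - a p.2) * (b p.1 - b p.2) ∂P =
      (∫ p : ℝ × ℝ, a p.1 * b p.1 ∂P) - (∫ p : ℝ × ℝ, a p.1 * b p.2 ∂P)
        - (∫ p : ℝ × ℝ, a p.2 * b p.1 ∂P) + ∫ p : ℝ × ℝ, a p.2 * b p.2 ∂P := by
    have step : ∫ p : ℝ × ℝ, (a p.1 - a p.2) * (b p.1 - b p.2) ∂P =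
        ∫ p : ℝ × ℝ, (a p.1 * b p.1 - a p.1 * b p.2 - a p.2 * b p.1 + a p.2 * b p.2) ∂P := by
      congr 1; ext p; ring
    rw [step,
      integral_add (μ := P)
        (f := fun p : ℝ × ℝ => a p.1 * b p.1 - a p.1 * b p.2 - a p.2 * b p.1)
        (g := fun p : ℝ × ℝ => a p.2 * b p.2) ((I1.sub I2).sub I3) I4,
      integral_sub (f := fun p : ℝ × ℝ => a p.1 * b p.1 - a p.1 * b p.2)
        (g := fun p : ℝ × ℝ => a p.2 * b p.1) (I1.sub I2) I3,
      integral_sub (f := fun p : ℝ × ℝ => a p.1 * b p.1)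
        (g := fun p : ℝ × ℝ => a p.1 * b p.2) I1 I2]
  have e1 : ∫ p : ℝ × ℝ, a p.1 * b p.1 ∂P = ∫ u, a u * b u ∂μ := by
    have := integral_prod_mul (μ := μ) (ν := μ) (fun u => a u * b u) (fun _ => (1:ℝ))
    simpa using this
  have e4 : ∫ p : ℝ × ℝ, a p.2 * b p.2 ∂P = ∫ u, a u * b u ∂μ := by
    have := integral_prod_mul (μ := μ) (ν := μ) (fun _ => (1:ℝ)) (fun u => a u * b u)
    simpa using this
  have e2 : ∫ p : ℝ × ℝ, a p.1 * b p.2 ∂P = (∫ u, a u ∂μ) * ∫ u, b u ∂μ :=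
    integral_prod_mul a b
  have e3 : ∫ p : ℝ × ℝ, a p.2 * b p.1 ∂P = (∫ u, b u ∂μ) * ∫ u, a u ∂μ := by
    rw [show (fun p : ℝ × ℝ => a p.2 * b p.1) = fun p : ℝ × ℝ => b p.1 * a p.2 from
      funext fun p => mul_comm _ _]
    exact integral_prod_mul b a
  rw [expand, e1, e2, e3, e4] at key
  nlinarith [key]
end Aux3
section Aux4
variable (μ : MeasureTheory.Measure ℝ) [IsProbabilityMeasure μ]

lemma hfun_eq {s : ℝ} (hs : 0 < s) :
    hfun μ s = s * ∫ u, (s ^ 2 + u ^ 2)⁻¹ ∂μ := by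
  unfold hfun
  simp_rw [div_eq_mul_inv]
  exact integral_const_mul s _

lemma hfun_pos {s : ℝ} (hs : 0 < s) : 0 < hfun μ s := by
  rw [hfun_eq μ hs]; exact mul_pos hs (Fr_pos μ hs)

lemma kfun_zero {s : ℝ} (hs : 0 < s) :
    kfun μ s 0 = (∫ u, (s ^ 2 + u ^ 2)⁻¹ ∂μ)⁻¹ - s ^ 2 := by
  unfold kfun
  rw [hfun_eq μ hs]
  have hF := Fr_pos μ hs
  set F := ∫ u, (s ^ 2 + u ^ 2)⁻¹ ∂μ with hFdef
  rw [show (1:ℝ) / (s * F) = s⁻¹ * F⁻¹ by rw [one_div, mul_inv]]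
  have hs' : s ≠ 0 := hs.ne'
  field_simp
  ring

lemma kfun_zero_pos {s : ℝ} (hs : 0 < s) (hnd : μ ≠ MeasureTheory.Measure.dirac 0) :
    0 < kfun μ s 0 := by
  rw [kfun_zero μ hs]
  have hF := Fr_pos μ hs
  have hlt := Fr_lt μ hs hnd
  have h1 : (∫ u, (s ^ 2 + u ^ 2)⁻¹ ∂μ) * s ^ 2 < 1 := by
    have := mul_lt_mul_of_pos_right hlt (show (0:ℝ) < s ^ 2 by positivity)
    rwa [inv_mul_cancel₀ (by positivity : (s:ℝ) ^ 2 ≠ 0)] at this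
  have h2 : s ^ 2 < (∫ u, (s ^ 2 + u ^ 2)⁻¹ ∂μ)⁻¹ := by
    rw [lt_inv_comm₀ (by positivity) hF] at *
    · nlinarith [hF, h1]
  linarith

lemma gmono {s₁ s₂ : ℝ} (h1 : 0 < s₁) (h12 : s₁ ≤ s₂) :
    (∫ u, (s₁ ^ 2 + u ^ 2)⁻¹ ∂μ)⁻¹ - s₁ ^ 2 ≤ (∫ u, (s₂ ^ 2 + u ^ 2)⁻¹ ∂μ)⁻¹ - s₂ ^ 2 := by
  have h2 : 0 < s₂ := lt_of_lt_of_le h1 h12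
  set x := ∫ u, (s₁ ^ 2 + u ^ 2)⁻¹ ∂μ with hx
  set y := ∫ u, (s₂ ^ 2 + u ^ 2)⁻¹ ∂μ with hy
  have px : 0 < x := Fr_pos μ h1
  have py : 0 < y := Fr_pos μ h2
  have hdiff : x - y = (s₂ ^ 2 - s₁ ^ 2) * ∫ u, (s₁ ^ 2 + u ^ 2)⁻¹ * (s₂ ^ 2 + u ^ 2)⁻¹ ∂μ := by
    rw [hx, hy, ← integral_sub (int_inv μ h1) (int_inv μ h2), ← integral_const_mul (s₂ ^ 2 - s₁ ^ 2)]
    refine integral_congr_ae (Filter.Eventually.of_forall fun u => ?_)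
    have d1 : (0:ℝ) < s₁ ^ 2 + u ^ 2 := by positivity
    have d2 : (0:ℝ) < s₂ ^ 2 + u ^ 2 := by positivity
    field_simp
    try ring
  have hch := cheb μ h1 h2
  have hxy : x - y ≥ (s₂ ^ 2 - s₁ ^ 2) * (x * y) := by
    rw [hdiff]
    have hnn : (0:ℝ) ≤ s₂ ^ 2 - s₁ ^ 2 := by nlinarith
    exact mul_le_mul_of_nonneg_left hch hnn
  have hprod : 0 < x⁻¹ * y⁻¹ := by positivity
  have step := mul_le_mul_of_nonneg_right hxy (le_of_lt hprod)
  have e1 : (x - y) * (x⁻¹ * y⁻¹) = y⁻¹ - x⁻¹ := by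
    have h : (x - y) * (x⁻¹ * y⁻¹) = (x * x⁻¹) * y⁻¹ - (y * y⁻¹) * x⁻¹ := by ring
    rw [h, mul_inv_cancel₀ px.ne', mul_inv_cancel₀ py.ne', one_mul, one_mul]
  have e2 : ((s₂ ^ 2 - s₁ ^ 2) * (x * y)) * (x⁻¹ * y⁻¹) = s₂ ^ 2 - s₁ ^ 2 := by
    have h : ((s₂ ^ 2 - s₁ ^ 2) * (x * y)) * (x⁻¹ * y⁻¹) =
        (s₂ ^ 2 - s₁ ^ 2) * ((x * x⁻¹) * (y * y⁻¹)) := by ring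
    rw [h, mul_inv_cancel₀ px.ne', mul_inv_cancel₀ py.ne', one_mul, mul_one]
  rw [e1, e2] at step
  linarith

lemma kdecomp {s t : ℝ} (hs : s ≠ 0) :
    kfun μ s t = kfun μ s 0 * (1 - t / s) + (s - t) * t := by
  unfold kfun
  field_simp
  ring
end Aux4
section Cx
variable (μ : MeasureTheory.Measure ℝ) [IsProbabilityMeasure μ]

noncomputable def Fc (μ : MeasureTheory.Measure ℝ) (z : ℂ) : ℂ := ∫ u, (z + u * I)⁻¹ ∂μ

lemma re_add_smulI (z : ℂ) (u : ℝ) : (z + u * I).re = z.re := by simp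

lemma add_smulI_ne {z : ℂ} (hz : 0 < z.re) (u : ℝ) : z + u * I ≠ 0 := by
  intro h
  have := re_add_smulI z u
  rw [h] at this
  simp at this
  rw [← this] at hz
  exact lt_irrefl _ hz

lemma re_le_norm_add {z : ℂ} (u : ℝ) : z.re ≤ ‖z + u * I‖ := by
  calc z.re = (z + u * I).re := (re_add_smulI z u).symm
    _ ≤ ‖z + u * I‖ := Complex.re_le_norm _

lemma norm_inv_add_le {z : ℂ} (hz : 0 < z.re) (u : ℝ) : ‖(z + u * I)⁻¹‖ ≤ (z.re)⁻¹ := by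
  rw [norm_inv]
  exact inv_anti₀ hz (re_le_norm_add u)

lemma cont_inv_add {z : ℂ} (hz : 0 < z.re) :
    Continuous (fun u : ℝ => (z + u * I)⁻¹) :=
  (continuous_const.add (Complex.continuous_ofReal.mul continuous_const)).inv₀
    fun u => add_smulI_ne hz u

lemma int_inv_add {z : ℂ} (hz : 0 < z.re) :
    Integrable (fun u : ℝ => (z + u * I)⁻¹) μ :=
  my_int_bdd μ (cont_inv_add hz).aestronglyMeasurable (z.re)⁻¹ fun u => norm_inv_add_le hz u

lemma Fc_hasDeriv {z₀ : ℂ} (hz₀ : 0 < z₀.re) :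
    HasDerivAt (Fc μ) (∫ u, -1 / (z₀ + u * I) ^ 2 ∂μ) z₀ := by
  set ε := z₀.re / 2 with hε
  have εpos : 0 < ε := by positivity
  have hball : ∀ z ∈ Metric.ball z₀ ε, ε < z.re := by
    intro z hzball
    have h1 : ‖z - z₀‖ < ε := by
      rw [← dist_eq_norm]; exact Metric.mem_ball.mp hzball
    have h2 : |(z - z₀).re| ≤ ‖z - z₀‖ := by
      exact Complex.abs_re_le_norm _
    have h3 : |z.re - z₀.re| < ε := by
      rw [← Complex.sub_re]; exact lt_of_le_of_lt h2 h1
    have := abs_lt.mp h3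
    simp only [hε] at *
    linarith [this.1]
  have key := hasDerivAt_integral_of_dominated_loc_of_deriv_le (μ := μ)
    (F := fun z (u : ℝ) => (z + u * I)⁻¹) (F' := fun z (u : ℝ) => -1 / (z + u * I) ^ 2)
    (x₀ := z₀) (bound := fun _ => (ε⁻¹) ^ 2) (Metric.ball_mem_nhds z₀ εpos)
    ?_ (int_inv_add μ hz₀) ?_ ?_ (integrable_const _) ?_
  · exact key.2
  · filter_upwards [Metric.ball_mem_nhds z₀ εpos] with z hz
    exact (cont_inv_add (lt_trans εpos (hball z hz))).aestronglyMeasurable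
  · refine Continuous.aestronglyMeasurable ?_
    exact continuous_const.div
      ((continuous_const.add (Complex.continuous_ofReal.mul continuous_const)).pow 2)
      fun u => pow_ne_zero _ (add_smulI_ne hz₀ u)
  · refine Filter.Eventually.of_forall fun u => ?_
    intro z hz
    have hzre : 0 < z.re := lt_trans εpos (hball z hz)
    have h1 : ε ≤ ‖z + u * I‖ := le_trans (hball z hz).le (re_le_norm_add u)
    rw [norm_div, norm_neg, norm_one, norm_pow, one_div,
      show ((ε:ℝ)⁻¹) ^ 2 = (ε ^ 2)⁻¹ by rw [inv_pow]]
    exact inv_anti₀ (by positivity) (by nlinarith [norm_nonneg (z + u * I)])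
  · refine Filter.Eventually.of_forall fun u => ?_
    intro z hz
    have hzre : 0 < z.re := lt_trans εpos (hball z hz)
    have hne : z + u * I ≠ 0 := add_smulI_ne hzre u
    have hd : HasDerivAt (fun w : ℂ => w + u * I) 1 z := (hasDerivAt_id z).add_const _
    have := hd.inv hne
    simpa [Pi.inv_def] using this
end Cx
section Cx2
variable (μ : MeasureTheory.Measure ℝ) [IsProbabilityMeasure μ]

lemma Fc_analytic : AnalyticOnNhd ℂ (Fc μ) {z : ℂ | 0 < z.re} := by
  have hopen : IsOpen {z : ℂ | 0 < z.re} := isOpen_lt continuous_const Complex.continuous_re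
  refine DifferentiableOn.analyticOnNhd (fun z hz => ?_) hopen
  exact (Fc_hasDeriv μ hz).differentiableAt.differentiableWithinAt

lemma hfun_re {s : ℝ} (hs : 0 < s) : hfun μ s = (Fc μ (s : ℂ)).re := by
  unfold hfun Fc
  have hre : (0:ℝ) < (s : ℂ).re := by simpa using hs
  rw [← RCLike.re_eq_complex_re, ← integral_re (int_inv_add μ hre)]
  refine integral_congr_ae (Filter.Eventually.of_forall fun u => ?_)
  rw [RCLike.re_eq_complex_re]
  show s / (s ^ 2 + u ^ 2) = ((↑s + ↑u * I)⁻¹).re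
  have hre2 : ((s:ℂ) + u * I).re = s := by simp
  have him : ((s:ℂ) + u * I).im = u := by simp
  rw [Complex.inv_re, Complex.normSq_apply, hre2, him]
  rw [div_eq_div_iff (by positivity) (by nlinarith [sq_nonneg u])]
  ring

lemma hfun_analytic : AnalyticOnNhd ℝ (hfun μ) (Ioi (0:ℝ)) := by
  intro s hs
  have hs' : (0:ℝ) < s := hs
  have A1 : AnalyticAt ℂ (Fc μ) ((s : ℝ) : ℂ) := Fc_analytic μ _ (by simpa using hs')
  have A2 : AnalyticAt ℝ (Fc μ) ((s : ℝ) : ℂ) := A1.restrictScalars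
  have A3 : AnalyticAt ℝ (fun x : ℝ => Fc μ (x : ℂ)) s :=
    A2.comp (Complex.ofRealCLM.analyticAt s)
  have A4 : AnalyticAt ℝ (fun x : ℝ => (Fc μ (x : ℂ)).re) s :=
    (Complex.reCLM.analyticAt _).comp A3
  refine A4.congr ?_
  filter_upwards [Ioi_mem_nhds hs'] with x hx
  exact (hfun_re μ hx).symm
end Cx2
/-- For a symmetric non-Dirac probability measure `μ` on `ℝ`, the function `k` is
real-analytic on `(0,∞) × ℝ`, and for each `t > 0` the map `s ↦ k(s,t)` is a strictly
increasing bijection of `(t,∞)` onto `(0,∞)`. -/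
theorem stmt2 (μ : MeasureTheory.Measure ℝ) [IsProbabilityMeasure μ]
    (hsym : μ.map (fun u => -u) = μ)
    (hnd : ∀ c : ℝ, μ ≠ MeasureTheory.Measure.dirac c) :
    AnalyticOn ℝ (fun p : ℝ × ℝ => kfun μ p.1 p.2) (Ioi (0 : ℝ) ×ˢ (univ : Set ℝ)) ∧
      ∀ t : ℝ, 0 < t →
        StrictMonoOn (fun s => kfun μ s t) (Ioi t) ∧
          BijOn (fun s => kfun μ s t) (Ioi t) (Ioi (0 : ℝ)) := by
  have hnd0 : μ ≠ MeasureTheory.Measure.dirac 0 := hnd 0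
  constructor
  · -- Analyticity
    refine AnalyticOnNhd.analyticOn ?_
    intro p hp
    have hp1 : 0 < p.1 := hp.1
    have Af : AnalyticAt ℝ (fun q : ℝ × ℝ => hfun μ q.1) p :=
      (hfun_analytic μ p.1 hp1).comp analyticAt_fst
    have Ainv : AnalyticAt ℝ (fun q : ℝ × ℝ => 1 / hfun μ q.1) p :=
      analyticAt_const.div Af (hfun_pos μ hp1).ne'
    have : AnalyticAt ℝ
        (fun q : ℝ × ℝ => (q.1 - q.2) * (1 / hfun μ q.1 - q.1 + q.2)) p :=
      (analyticAt_fst.sub analyticAt_snd).mul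
        ((Ainv.sub analyticAt_fst).add analyticAt_snd)
    exact this
  · intro t ht
    have hmono : StrictMonoOn (fun s => kfun μ s t) (Ioi t) := by
      intro s₁ hs₁ s₂ hs₂ h12
      have hts₁ : t < s₁ := hs₁
      have hts₂ : t < s₂ := hs₂
      have hp₁ : 0 < s₁ := lt_trans ht hts₁
      have hp₂ : 0 < s₂ := lt_trans ht hts₂
      simp only
      rw [kdecomp μ hp₁.ne', kdecomp μ hp₂.ne']
      have hk₀₁ : 0 < kfun μ s₁ 0 := kfun_zero_pos μ hp₁ hnd0
      have hk12 : kfun μ s₁ 0 ≤ kfun μ s₂ 0 := by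
        rw [kfun_zero μ hp₁, kfun_zero μ hp₂]
        exact gmono μ hp₁ h12.le
      have hfrac1 : 0 < 1 - t / s₁ := by
        rw [sub_pos, div_lt_one hp₁]; exact hts₁
      have hfrac : 1 - t / s₁ < 1 - t / s₂ := by
        have := div_lt_div_of_pos_left ht hp₁ h12
        linarith
      have m1 : kfun μ s₁ 0 * (1 - t / s₁) < kfun μ s₁ 0 * (1 - t / s₂) :=
        mul_lt_mul_of_pos_left hfrac hk₀₁
      have m2 : kfun μ s₁ 0 * (1 - t / s₂) ≤ kfun μ s₂ 0 * (1 - t / s₂) :=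
        mul_le_mul_of_nonneg_right hk12 (by linarith)
      have m3 : (s₁ - t) * t < (s₂ - t) * t := by nlinarith
      linarith
    refine ⟨hmono, ?_, hmono.injOn, ?_⟩
    · -- MapsTo
      intro s hs
      have hts : t < s := hs
      have hp : 0 < s := lt_trans ht hts
      have hk₀ : 0 < kfun μ s 0 := kfun_zero_pos μ hp hnd0
      have hfrac : 0 < 1 - t / s := by rw [sub_pos, div_lt_one hp]; exact hts
      have : 0 < kfun μ s t := by
        rw [kdecomp μ hp.ne']
        have : 0 < (s - t) * t := mul_pos (by linarith) ht
        nlinarith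
      exact this
    · -- SurjOn
      intro y hy
      have hy0 : 0 < y := hy
      set s₂ := t + (y + 1) / t with hs₂def
      clear_value s₂
      have hq : 0 < (y + 1) / t := by positivity
      have hts₂ : t < s₂ := by rw [hs₂def]; linarith
      have hsub : Icc t s₂ ⊆ Ioi (0:ℝ) := fun x hx => lt_of_lt_of_le ht hx.1
      have hcont : ContinuousOn (fun s => kfun μ s t) (Icc t s₂) := by
        have hc1 : ContinuousOn (hfun μ) (Icc t s₂) :=
          ((hfun_analytic μ).continuousOn).mono hsub
        have hne : ∀ x ∈ Icc t s₂, hfun μ x ≠ 0 := fun x hx =>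
          (hfun_pos μ (hsub hx)).ne'
        have : ContinuousOn
            (fun s : ℝ => (s - t) * (1 / hfun μ s - s + t)) (Icc t s₂) :=
          ((continuousOn_id.sub continuousOn_const).mul
            (((continuousOn_const.div hc1 hne).sub continuousOn_id).add
              continuousOn_const))
        exact this
      have hft : kfun μ t t = 0 := by simp [kfun]
      have hfs₂ : y ≤ kfun μ s₂ t := by
        have hp₂ : 0 < s₂ := lt_trans ht hts₂
        rw [kdecomp μ hp₂.ne']
        have hk₀ : 0 < kfun μ s₂ 0 := kfun_zero_pos μ hp₂ hnd0
        have hfrac : 0 < 1 - t / s₂ := by rw [sub_pos, div_lt_one hp₂]; exact hts₂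
        have he : (s₂ - t) * t = y + 1 := by
          rw [hs₂def]
          field_simp
          ring
        nlinarith [mul_pos hk₀ hfrac]
      have hmem : y ∈ Icc (kfun μ t t) (kfun μ s₂ t) := by
        rw [hft]; exact ⟨hy0.le, hfs₂⟩
      obtain ⟨x, hxmem, hxy⟩ := intermediate_value_Icc hts₂.le hcont hmem
      have hxt : t < x := by
        rcases eq_or_lt_of_le hxmem.1 with h | h
        · exfalso
          subst h
          have h2 : kfun μ t t = y := hxy
          rw [hft] at h2
          exact hy0.ne h2
        · exact h
      exact ⟨x, hxt, hxy⟩
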